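/- Fix an integer ℓ ≥ 0 and an integer N ≥ 2^{ℓ+1}, and let j be an integer with |j| > N/2^{ℓ+2}. Then ∫_{2^ℓ/N}^{2^{ℓ+1}/N} (min{N, 1/‖jα‖})² dα ≤ 2^{ℓ+8}. -/

import Mathlib

open MeasureTheory

noncomputable def fN (N : ℕ) : ℝ → ℝ := fun t =>
  if t - round t = 0 then ((N : ℝ)) ^ 2
  else (min (N : ℝ) (1 / |t - round t|)) ^ 2

lemma fN_nonneg (N : ℕ) (t : ℝ) : 0 ≤ fN N t := by
  unfold fN
  split <;> positivity

lemma fN_le_sq (N : ℕ) (t : ℝ) : fN N t ≤ (N : ℝ) ^ 2 := by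
  unfold fN
  split
  · exact le_rfl
  · have h1 : (0:ℝ) ≤ min (N : ℝ) (1 / |t - round t|) :=
      le_min (by positivity) (by positivity)
    have h2 : min (N : ℝ) (1 / |t - round t|) ≤ (N : ℝ) := min_le_left _ _
    exact pow_le_pow_left₀ h1 h2 2

lemma fN_periodic (N : ℕ) : Function.Periodic (fN N) 1 := by
  intro t
  have h : (t + 1) - round (t + 1) = t - round t := by
    rw [round_add_one]; push_cast; ring
  unfold fN
  rw [h]

lemma fN_measurable (N : ℕ) : Measurable (fN N) := by
  have hr : Measurable fun t : ℝ => t - (round t : ℝ) := by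
    have : Measurable fun t : ℝ => ((⌊t + 1/2⌋ : ℤ) : ℝ) :=
      measurable_from_top.comp ((measurable_id.add_const _).floor)
    have h2 : (fun t : ℝ => t - (round t : ℝ)) = fun t : ℝ => t - ((⌊t + 1/2⌋ : ℤ) : ℝ) := by
      funext t; rw [round_eq]
    rw [h2]
    exact measurable_id.sub this
  unfold fN
  apply Measurable.ite (hr (MeasurableSet.singleton 0)) measurable_const
  exact ((measurable_const.min (hr.abs.inv.const_mul 1 |>.mono le_rfl le_rfl)).pow_const 2)

lemma fN_intervalIntegrable (N : ℕ) (a b : ℝ) : IntervalIntegrable (fN N) volume a b := by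
  rw [intervalIntegrable_iff]
  apply Integrable.mono' (g := fun _ => (N:ℝ)^2)
  · exact integrableOn_const measure_Ioc_lt_top.ne
  · exact (fN_measurable N).aestronglyMeasurable
  · refine ae_of_all _ fun t => ?_
    rw [Real.norm_eq_abs, abs_of_nonneg (fN_nonneg N t)]
    exact fN_le_sq N t

lemma fN_le_zpow (N : ℕ) (hN2 : 2 ≤ N) {t : ℝ} (ht1 : 1 / (N:ℝ) ≤ |t|) (ht2 : |t| ≤ 1/2) :
    fN N t ≤ t ^ (-2 : ℤ) := by
  have hN0 : (0:ℝ) < N := by exact_mod_cast (by omega : 0 < N)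
  have h0 : 0 < |t| := lt_of_lt_of_le (by positivity) ht1
  have hge : |t| ≤ |t - round t| := by
    rcases eq_or_ne (round t) 0 with h | h
    · simp [h]
    · have h1 : (1:ℝ) ≤ |((round t : ℤ) : ℝ)| := by
        exact_mod_cast Int.one_le_abs h
      have h3 : |((round t : ℤ) : ℝ)| - |t| ≤ |t - round t| := by
        rw [abs_sub_comm]
        exact le_trans (by linarith [abs_sub_abs_le_abs_sub ((round t : ℤ) : ℝ) t]) le_rfl
      linarith
  have hne : t - round t ≠ 0 := by
    intro h
    rw [h, abs_zero] at hge
    linarith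
  unfold fN
  rw [if_neg hne]
  have hmin0 : (0:ℝ) ≤ min (N : ℝ) (1 / |t - round t|) := le_min (by positivity) (by positivity)
  have hmin : min (N : ℝ) (1 / |t - round t|) ≤ 1 / |t| :=
    min_le_of_right_le (by apply one_div_le_one_div_of_le h0 hge)
  calc (min (N : ℝ) (1 / |t - round t|)) ^ 2 ≤ (1 / |t|) ^ 2 := pow_le_pow_left₀ hmin0 hmin 2
    _ = t ^ (-2 : ℤ) := by
        rw [div_pow, one_pow, sq_abs, zpow_neg]
        norm_num [zpow_two, pow_two]

lemma fN_integral_period (N : ℕ) (hN2 : 2 ≤ N) :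
    ∫ t in (0:ℝ)..1, fN N t ≤ 4 * N := by
  have hN0 : (0:ℝ) < N := by exact_mod_cast (by omega : 0 < N)
  have hN2' : (2:ℝ) ≤ N := by exact_mod_cast hN2
  have hNinv : 1 / (N:ℝ) ≤ 1/2 := by
    rw [div_le_div_iff₀ hN0 (by norm_num)]; linarith
  have hNinv0 : 0 < 1 / (N:ℝ) := by positivity
  have hsym : ∫ t in (0:ℝ)..1, fN N t = ∫ t in (-(1/2):ℝ)..(1/2), fN N t := by
    have := (fN_periodic N).intervalIntegral_add_eq 0 (-(1/2))
    norm_num at this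
    exact this
  rw [hsym]
  rw [← intervalIntegral.integral_add_adjacent_intervals
        (fN_intervalIntegrable N (-(1/2)) (-(1/N))) (fN_intervalIntegrable N (-(1/N)) (1/2)),
      ← intervalIntegral.integral_add_adjacent_intervals
        (fN_intervalIntegrable N (-(1/N)) (1/N)) (fN_intervalIntegrable N (1/N) (1/2))]
  have hz1 : (0:ℝ) ∉ Set.uIcc (-(1/2):ℝ) (-(1/N)) := by
    rw [Set.mem_uIcc]; push_neg
    constructor <;> intro h <;> [skip; linarith] <;> linarith
  have hz2 : (0:ℝ) ∉ Set.uIcc (1/(N:ℝ)) (1/2) := by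
    rw [Set.mem_uIcc]; push_neg
    constructor <;> intro h <;> linarith
  have h1 : ∫ t in (-(1/2):ℝ)..(-(1/N)), fN N t ≤ (N:ℝ) - 2 := by
    have e1 : ∫ t in (-(1/2):ℝ)..(-(1/N)), t ^ (-2:ℤ) = (N:ℝ) - 2 := by
      rw [integral_zpow (Or.inr ⟨by norm_num, hz1⟩)]
      norm_num
      try field_simp
      try ring
    rw [← e1]
    apply intervalIntegral.integral_mono_on (by linarith) (fN_intervalIntegrable N _ _)
      (intervalIntegral.intervalIntegrable_zpow (Or.inr hz1))
    intro x hx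
    obtain ⟨hx1, hx2⟩ := hx
    apply fN_le_zpow N hN2
    · rw [abs_of_nonpos (by linarith)]; linarith
    · rw [abs_of_nonpos (by linarith)]; linarith
  have h3 : ∫ t in (1/(N:ℝ))..(1/2), fN N t ≤ (N:ℝ) - 2 := by
    have e3 : ∫ t in (1/(N:ℝ))..(1/2), t ^ (-2:ℤ) = (N:ℝ) - 2 := by
      rw [integral_zpow (Or.inr ⟨by norm_num, hz2⟩)]
      norm_num
      try field_simp
      try ring
    rw [← e3]
    apply intervalIntegral.integral_mono_on (by linarith) (fN_intervalIntegrable N _ _)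
      (intervalIntegral.intervalIntegrable_zpow (Or.inr hz2))
    intro x hx
    obtain ⟨hx1, hx2⟩ := hx
    apply fN_le_zpow N hN2
    · rw [abs_of_nonneg (by linarith)]; linarith
    · rw [abs_of_nonneg (by linarith)]; linarith
  have h2 : ∫ t in (-(1/(N:ℝ)))..(1/(N:ℝ)), fN N t ≤ 2 * N := by
    have e2 : ∫ t in (-(1/(N:ℝ)))..(1/(N:ℝ)), (N:ℝ)^2 = 2 * N := by
      rw [intervalIntegral.integral_const, smul_eq_mul]
      field_simp
      ring
    rw [← e2]
    apply intervalIntegral.integral_mono_on (by linarith) (fN_intervalIntegrable N _ _)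
      intervalIntegrable_const
    intro x _
    exact fN_le_sq N x
  linarith

lemma fN_sum_bound (N : ℕ) (hN2 : 2 ≤ N) :
    ∀ (n : ℕ) (c : ℝ), ∫ t in c..(c + n), fN N t ≤ n * (4 * N) := by
  intro n
  induction n with
  | zero => intro c; simp
  | succ n ih =>
    intro c
    have hsplit : (c : ℝ) + ((n+1 : ℕ) : ℝ) = (c + 1) + n := by push_cast; ring
    rw [hsplit, ← intervalIntegral.integral_add_adjacent_intervals
      (fN_intervalIntegrable N c (c+1)) (fN_intervalIntegrable N (c+1) ((c+1)+n))]
    have hper : ∫ t in c..(c+1), fN N t ≤ 4 * N := by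
      have := (fN_periodic N).intervalIntegral_add_eq c 0
      norm_num at this
      rw [this]
      exact fN_integral_period N hN2
    have := ih (c + 1)
    push_cast
    linarith

lemma fN_interval_bound (N : ℕ) (hN2 : 2 ≤ N) (u v : ℝ) (huv : u ≤ v) :
    ∫ t in u..v, fN N t ≤ (v - u + 1) * (4 * N) := by
  have hN0 : (0:ℝ) ≤ N := by positivity
  set n : ℕ := ⌈v - u⌉₊ with hn
  have h1 : v ≤ u + n := by
    have := Nat.le_ceil (v - u)
    rw [← hn] at this
    linarith
  have h2 : (n : ℝ) ≤ v - u + 1 := by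
    have := Nat.ceil_lt_add_one (by linarith : (0:ℝ) ≤ v - u)
    rw [← hn] at this
    linarith
  calc ∫ t in u..v, fN N t ≤ ∫ t in u..(u + n), fN N t := by
        apply intervalIntegral.integral_mono_interval le_rfl huv h1
          (ae_of_all _ fun t => fN_nonneg N t) (fN_intervalIntegrable N u (u + n))
    _ ≤ n * (4 * N) := fN_sum_bound N hN2 n u
    _ ≤ (v - u + 1) * (4 * N) := by
        apply mul_le_mul_of_nonneg_right h2 (by positivity)

lemma fN_scaled_bound (ℓ N : ℕ) (hN2 : 2 ≤ N) (d u v : ℝ)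
    (hd : (N:ℝ) / 2 ^ (ℓ + 2) < d) (hlen : v - u = d * ((2:ℝ)^ℓ / N)) :
    d⁻¹ * ∫ t in u..v, fN N t ≤ 2 ^ (ℓ + 8) := by
  have hN0 : (0:ℝ) < N := by exact_mod_cast (by omega : 0 < N)
  have hP : (0:ℝ) < 2 ^ ℓ := by positivity
  have hd0 : (0:ℝ) < d := lt_trans (by positivity) hd
  have huv : u ≤ v := by
    have : 0 ≤ d * ((2:ℝ)^ℓ / N) := by positivity
    linarith
  have hI := fN_interval_bound N hN2 u v huv
  have step : d⁻¹ * ∫ t in u..v, fN N t ≤ d⁻¹ * ((v - u + 1) * (4 * N)) :=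
    mul_le_mul_of_nonneg_left hI (by positivity)
  refine le_trans step ?_
  rw [hlen]
  have hd' : (N:ℝ) < d * (4 * 2 ^ ℓ) := by
    rw [div_lt_iff₀ (by positivity)] at hd
    calc (N:ℝ) < d * 2 ^ (ℓ + 2) := hd
      _ = d * (4 * 2 ^ ℓ) := by ring
  have h28 : (2:ℝ) ^ (ℓ + 8) = 256 * 2 ^ ℓ := by rw [pow_add]; ring
  rw [h28, inv_mul_le_iff₀ hd0]
  have hcancel : d * ((2:ℝ)^ℓ / N) * (4 * N) = 4 * d * 2 ^ ℓ := by
    field_simp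
  nlinarith [mul_pos hd0 hP]

theorem min_dist_integral_bound (ℓ N : ℕ) (hN : 2 ^ (ℓ + 1) ≤ N) (j : ℤ)
    (hj : (N : ℝ) / 2 ^ (ℓ + 2) < |(j : ℝ)|) :
    (∫ α in ((2:ℝ)^ℓ / N)..((2:ℝ)^(ℓ+1) / N),
      if (j : ℝ) * α - round ((j : ℝ) * α) = 0 then ((N : ℝ)) ^ 2
      else (min (N : ℝ) (1 / |(j : ℝ) * α - round ((j : ℝ) * α)|)) ^ 2)
      ≤ 2 ^ (ℓ + 8) := by
  have hN2 : 2 ≤ N := le_trans (by calc 2 = 2^1 := by norm_num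
                                    _ ≤ 2^(ℓ+1) := Nat.pow_le_pow_right (by norm_num) (by omega)) hN
  have hN0 : (0:ℝ) < N := by exact_mod_cast (by omega : 0 < N)
  set c : ℝ := (j : ℝ) with hc
  have hc0 : c ≠ 0 := by
    intro h
    rw [h, abs_zero] at hj
    have : (0:ℝ) < (N:ℝ) / 2 ^ (ℓ + 2) := by positivity
    linarith
  set a : ℝ := (2:ℝ)^ℓ / N with ha
  set b : ℝ := (2:ℝ)^(ℓ+1) / N with hb
  have hgoal : (∫ α in a..b,
      if c * α - round (c * α) = 0 then ((N : ℝ)) ^ 2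
      else (min (N : ℝ) (1 / |c * α - round (c * α)|)) ^ 2)
      = ∫ α in a..b, fN N (c * α) := by
    rfl
  rw [hgoal, intervalIntegral.integral_comp_mul_left (fN N) hc0, smul_eq_mul]
  rcases hc0.lt_or_gt with hneg | hpos
  · have habs : |c| = -c := abs_of_neg hneg
    rw [intervalIntegral.integral_symm]
    have heq : c⁻¹ * (-(∫ t in c * b..c * a, fN N t)) = (-c)⁻¹ * ∫ t in c * b..c * a, fN N t := by
      rw [← neg_inv]; ring
    rw [heq]
    apply fN_scaled_bound ℓ N hN2 (-c) (c * b) (c * a)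
    · rw [← habs]; exact hj
    · rw [ha, hb, pow_succ]; field_simp; ring
  · have habs : |c| = c := abs_of_pos hpos
    apply fN_scaled_bound ℓ N hN2 c (c * a) (c * b)
    · rw [← habs]; exact hj
    · rw [ha, hb, pow_succ]; field_simp; ring
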